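/- Fix constants 0 < α < b, j ∈ N, δ, η > 0 and k ∈ N. There is a constant C₀ depending only on α and b such that for all sufficiently large n the following holds for every function PT as in the hypotheses: for every ℓ with n/2^j ≤ ℓ and kℓ ≤ n, every point z ∈ Box(n) that is (δ, S¹(η), ℓ, k)-Stable, every unit direction θ, and all ℓ', ℓ'' with (k/4)·ℓ ≤ ℓ', ℓ'' ≤ kℓ, one has grad(z,θ,ℓ') ≤ (1 + C₀(η + δ + 1/k))·grad(z,θ,ℓ''). -/

import Mathlib

noncomputable section

/-- Euclidean norm on `ℝ²`. -/
def norm2 (p : ℝ × ℝ) : ℝ := Real.sqrt (p.1 ^ 2 + p.2 ^ 2)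

/-- The box `[-r, r]² ⊆ ℝ²`. -/
def Box (r : ℝ) : Set (ℝ × ℝ) := {p | |p.1| ≤ r ∧ |p.2| ≤ r}

/-- The lattice box `[-r, r]² ∩ ℤ²`. -/
def LBox (r : ℝ) : Set (ℤ × ℤ) := {z | |(z.1 : ℝ)| ≤ r ∧ |(z.2 : ℝ)| ≤ r}

/-- The unit vector at angle `a`. -/
def dir (a : ℝ) : ℝ × ℝ := (Real.cos a, Real.sin a)

/-- `z` is `(δ, θ, ℓ, k)`-stable for the distance function `D`: for every integer
`1 ≤ k' ≤ k`, `k'·D(z, z+ℓθ)/(1+δ) ≤ D(z, z+k'ℓθ) ≤ (1+δ)·k'·D(z, z+ℓθ)`. -/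
def StablePt (D : ℝ × ℝ → ℝ × ℝ → ℝ) (δ : ℝ) (θ : ℝ × ℝ) (ℓ : ℝ) (k : ℝ)
    (z : ℝ × ℝ) : Prop :=
  ∀ k' : ℕ, 1 ≤ k' → (k' : ℝ) ≤ k →
    (k' : ℝ) * D z (z + ℓ • θ) / (1 + δ) ≤ D z (z + ((k' : ℝ) * ℓ) • θ) ∧
      D z (z + ((k' : ℝ) * ℓ) • θ) ≤ (1 + δ) * (k' : ℝ) * D z (z + ℓ • θ)

/-- `z` is `(δ, S¹(η), ℓ, k)`-stable: it is `(δ, θ, ℓ, k)`-stable for every direction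
`θ` in the discretized circle `S¹(η) = {0, η, 2η, …, 2π − η}`. -/
def StableDirs (D : ℝ × ℝ → ℝ × ℝ → ℝ) (δ η ℓ k : ℝ) (z : ℝ × ℝ) : Prop :=
  ∀ i : ℕ, (i : ℝ) * η ≤ 2 * Real.pi - η → StablePt D δ (dir ((i : ℝ) * η)) ℓ k z

/-- The gradient function `grad(z, θ, ℓ) = D(z, z + ℓθ)/ℓ`. -/
def grad (D : ℝ × ℝ → ℝ × ℝ → ℝ) (z : ℝ × ℝ) (θ : ℝ × ℝ) (ℓ : ℝ) : ℝ :=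
  D z (z + ℓ • θ) / ℓ

/-- `D : ℝ² × ℝ² → [0,∞)` satisfies the triangle inequality, `D(x,y) ≤ 3b|x−y| + 2b`
everywhere, and `α|x−y| ≤ D(x,y)` for `x, y ∈ Box(R)` with `|x−y| ≥ rt`. -/
def GoodPT (α b R rt : ℝ) (D : ℝ × ℝ → ℝ × ℝ → ℝ) : Prop :=
  (∀ x y, 0 ≤ D x y) ∧
  (∀ x y z, D x z ≤ D x y + D y z) ∧
  (∀ x y, D x y ≤ 3 * b * norm2 (x - y) + 2 * b) ∧
  (∀ x y, x ∈ Box R → y ∈ Box R → rt ≤ norm2 (x - y) → α * norm2 (x - y) ≤ D x y)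

/-- There is a constant `C₀ = C₀(α, b)` such that for all large `n`:
for `n/2^j ≤ ℓ` with `kℓ ≤ n`, every `(δ, S¹(η), ℓ, k)`-stable point `z ∈ Box(n)`,
every unit direction `θ`, and all `(k/4)ℓ ≤ ℓ', ℓ'' ≤ kℓ`,
`grad(z,θ,ℓ') ≤ (1 + C₀(η + δ + 1/k))·grad(z,θ,ℓ'')`. -/
lemma norm2_nonneg' (p : ℝ × ℝ) : 0 ≤ norm2 p := Real.sqrt_nonneg _

lemma norm2_sub_le (x y z : ℝ × ℝ) : norm2 (x - z) ≤ norm2 (x - y) + norm2 (y - z) := by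
  have h : ∀ p : ℝ × ℝ, norm2 p = ‖(⟨p.1, p.2⟩ : ℂ)‖ := by
    intro p
    simp [norm2, Complex.norm_def, Complex.normSq_mk, sq]
  rw [h, h, h]
  have e : ∀ u v : ℝ × ℝ, (⟨(u - v).1, (u - v).2⟩ : ℂ) = (⟨u.1, u.2⟩ : ℂ) - ⟨v.1, v.2⟩ := by
    intro u v; apply Complex.ext <;> simp
  rw [e, e, e]
  exact norm_sub_le_norm_sub_add_norm_sub _ _ _

lemma norm2_smul (c : ℝ) (p : ℝ × ℝ) : norm2 (c • p) = |c| * norm2 p := by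
  simp only [norm2, Prod.smul_fst, Prod.smul_snd, smul_eq_mul, mul_pow]
  rw [← mul_add, Real.sqrt_mul (sq_nonneg c), Real.sqrt_sq_eq_abs]

lemma norm2_dir (a : ℝ) : norm2 (dir a) = 1 := by
  simp only [norm2, dir]
  rw [show Real.cos a ^ 2 + Real.sin a ^ 2 = 1 by
    rw [add_comm]; exact Real.sin_sq_add_cos_sq a, Real.sqrt_one]

lemma abs_fst_le_norm2 (p : ℝ × ℝ) : |p.1| ≤ norm2 p := by
  rw [← Real.sqrt_sq_eq_abs]
  exact Real.sqrt_le_sqrt (by nlinarith [sq_nonneg p.2])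

lemma abs_snd_le_norm2 (p : ℝ × ℝ) : |p.2| ≤ norm2 p := by
  rw [← Real.sqrt_sq_eq_abs]
  exact Real.sqrt_le_sqrt (by nlinarith [sq_nonneg p.1])

lemma norm2_comm (x y : ℝ × ℝ) : norm2 (x - y) = norm2 (y - x) := by
  rw [show x - y = (-1 : ℝ) • (y - x) by module, norm2_smul]
  norm_num

lemma dir_sub_le (s t : ℝ) : norm2 (dir s - dir t) ≤ |s - t| := by
  have key : (Real.cos s - Real.cos t) ^ 2 + (Real.sin s - Real.sin t) ^ 2
      = 2 - 2 * Real.cos (s - t) := by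
    rw [Real.cos_sub]
    nlinarith [Real.sin_sq_add_cos_sq s, Real.sin_sq_add_cos_sq t]
  have h2 : 2 - 2 * Real.cos (s - t) ≤ (s - t) ^ 2 := by
    nlinarith [Real.one_sub_sq_div_two_le_cos (x := s - t)]
  have h3 : norm2 (dir s - dir t) = Real.sqrt (2 - 2 * Real.cos (s - t)) := by
    simp only [norm2, dir, Prod.fst_sub, Prod.snd_sub]
    rw [key]
  rw [h3, ← Real.sqrt_sq_eq_abs]
  exact Real.sqrt_le_sqrt h2

lemma exists_angle (θ : ℝ × ℝ) (h : norm2 θ = 1) :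
    ∃ a : ℝ, 0 ≤ a ∧ a < 2 * Real.pi ∧ θ = dir a := by
  set w : ℂ := ⟨θ.1, θ.2⟩ with hw
  have habs : ‖w‖ = 1 := by
    rw [← h]; simp only [norm2, Complex.norm_def, hw, Complex.normSq_mk]; ring_nf
  have hw0 : w ≠ 0 := by
    intro h0; rw [h0] at habs; simp at habs
  have hcos : Real.cos (Complex.arg w) = θ.1 := by
    rw [Complex.cos_arg hw0, habs]; simp [hw]
  have hsin : Real.sin (Complex.arg w) = θ.2 := by
    rw [Complex.sin_arg, habs]; simp [hw]
  have hθ : θ = dir (Complex.arg w) := by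
    apply Prod.ext <;> simp [dir, hcos, hsin]
  rcases le_or_gt 0 (Complex.arg w) with h0 | h0
  · exact ⟨Complex.arg w, h0, lt_of_le_of_lt (Complex.arg_le_pi w)
      (by nlinarith [Real.pi_pos]), hθ⟩
  · refine ⟨Complex.arg w + 2 * Real.pi, by nlinarith [Complex.neg_pi_lt_arg w, Real.pi_pos],
      by nlinarith, ?_⟩
    rw [hθ]; apply Prod.ext <;> simp [dir, Real.cos_add_two_pi, Real.sin_add_two_pi]

set_option maxHeartbeats 1000000 in
private lemma keyineq (α b δ ε G C₀ : ℝ) (hα : 0 < α) (hab : α < b)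
    (hδ0 : 0 ≤ δ) (hδ1 : δ ≤ 1) (hδε : δ ≤ ε) (hε0 : 0 < ε)
    (hεb : 1000 * b * ε ≤ α) (hGlb : α ≤ (1 + δ) * G) (hGub : G ≤ 4 * b)
    (hG0 : 0 ≤ G) (hC : C₀ = 100000 * b ^ 2 / α ^ 2) :
    (1 + δ) * ((1 + δ) * G + 48 * b * ε) ≤ (1 + C₀ * ε) * (G - 48 * b * ε) := by
  have hb : 0 < b := hα.trans hab
  have hG48 : 0.4 * α ≤ G - 48 * b * ε := by nlinarith
  have hC40 : 300 * b ≤ 0.4 * α * C₀ := by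
    have e : 0.4 * α * C₀ = 40000 * b ^ 2 / α := by rw [hC]; field_simp; ring
    rw [e, le_div_iff₀ hα]
    nlinarith
  have hC₀0 : 0 ≤ C₀ := by rw [hC]; positivity
  have p1 : 300 * b * ε ≤ 0.4 * α * C₀ * ε := mul_le_mul_of_nonneg_right hC40 hε0.le
  have p2 : C₀ * ε * (0.4 * α) ≤ C₀ * ε * (G - 48 * b * ε) :=
    mul_le_mul_of_nonneg_left hG48 (mul_nonneg hC₀0 hε0.le)
  have p3 : δ * G ≤ ε * (4 * b) := by nlinarith
  have p4 : δ * (δ * G) ≤ δ * G := by nlinarith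
  have p5 : δ * (b * ε) ≤ b * ε := by nlinarith
  nlinarith [p1, p2, p3, p4, p5]

set_option maxHeartbeats 1000000 in
private lemma stepA (b δ η ε kk ℓ ℓ' G g k₁ A E : ℝ)
    (hb : 0 < b) (hδ0 : 0 ≤ δ) (hδ1 : δ ≤ 1) (hη : 0 ≤ η)
    (hℓ2 : 2 ≤ ℓ) (hℓpos : 0 < ℓ) (hℓ2b : 2 * b ≤ ℓ)
    (hgG : g = G * ℓ) (hG0 : 0 ≤ G) (hGub : G ≤ 4 * b)
    (hE : E = 3 * b * (ℓ + η * (kk * ℓ)) + 2 * b)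
    (hekl : ℓ + η * (kk * ℓ) ≤ ε * (kk * ℓ))
    (hε0 : 0 < ε) (hkk1 : 1 ≤ kk)
    (hl'lo : kk / 4 * ℓ ≤ ℓ') (hk₁0 : 0 ≤ k₁)
    (hk₁ub : k₁ * ℓ ≤ ℓ' + ℓ)
    (hA : A ≤ (1 + δ) * k₁ * g + E) :
    A ≤ ((1 + δ) * G + 48 * b * ε) * ℓ' := by
  have hkkℓ0 : 0 ≤ η * (kk * ℓ) :=
    mul_nonneg hη (mul_nonneg (by linarith) hℓpos.le)
  have q1 : k₁ * g ≤ (ℓ' + ℓ) * G := by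
    have := mul_le_mul_of_nonneg_right hk₁ub hG0
    nlinarith [this]
  have q2 : (1 + δ) * k₁ * g ≤ (1 + δ) * ((ℓ' + ℓ) * G) := by
    nlinarith [mul_le_mul_of_nonneg_left q1 (by linarith : (0:ℝ) ≤ 1 + δ)]
  have q3 : ℓ ≤ ε * (kk * ℓ) := by nlinarith
  have hg4 : ℓ * G ≤ 4 * b * ℓ := by
    nlinarith [mul_le_mul_of_nonneg_left hGub hℓpos.le]
  have q4 : (1 + δ) * (ℓ * G) ≤ 8 * b * ℓ := by
    nlinarith [hg4, mul_nonneg (by linarith : (0:ℝ) ≤ 1 - δ) (mul_nonneg hℓpos.le hG0)]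
  have q5 : E ≤ 3 * b * (ε * (kk * ℓ)) + b * ℓ := by nlinarith
  have q6 : 12 * b * (ε * (kk * ℓ)) ≤ 48 * b * ε * ℓ' := by
    have h1 : 48 * b * ε * (kk / 4 * ℓ) ≤ 48 * b * ε * ℓ' :=
      mul_le_mul_of_nonneg_left hl'lo (by positivity)
    nlinarith [h1]
  have q7 : 9 * b * ℓ ≤ 9 * b * (ε * (kk * ℓ)) := by nlinarith
  nlinarith [q2, q4, q5, q6, q7]

set_option maxHeartbeats 1000000 in
private lemma stepB (b δ η ε kk ℓ ℓ'' G g k₂ B E : ℝ)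
    (hb : 0 < b) (hδ0 : 0 ≤ δ) (hδ1 : δ ≤ 1) (hη : 0 ≤ η)
    (hℓ2 : 2 ≤ ℓ) (hℓpos : 0 < ℓ) (hℓ2b : 2 * b ≤ ℓ)
    (hgG : g = G * ℓ) (hG0 : 0 ≤ G) (hGub : G ≤ 4 * b)
    (hE : E = 3 * b * (ℓ + η * (kk * ℓ)) + 2 * b)
    (hekl : ℓ + η * (kk * ℓ) ≤ ε * (kk * ℓ))
    (hε0 : 0 < ε) (hkk1 : 1 ≤ kk)
    (hl''lo : kk / 4 * ℓ ≤ ℓ'') (hk₂0 : 0 ≤ k₂)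
    (hk₂lb : ℓ'' ≤ k₂ * ℓ + ℓ)
    (hBlb : k₂ * g ≤ (1 + δ) * (B + E)) :
    (G - 48 * b * ε) * ℓ'' ≤ (1 + δ) * B := by
  have hkkℓ0 : 0 ≤ η * (kk * ℓ) :=
    mul_nonneg hη (mul_nonneg (by linarith) hℓpos.le)
  have q1 : ℓ'' * G ≤ k₂ * g + g := by
    have := mul_le_mul_of_nonneg_right hk₂lb hG0
    nlinarith [this]
  have q3 : ℓ ≤ ε * (kk * ℓ) := by nlinarith
  have q5 : E ≤ 3 * b * (ε * (kk * ℓ)) + b * ℓ := by nlinarith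
  have hE0 : 0 ≤ E := by rw [hE]; nlinarith
  have q4 : (1 + δ) * E ≤ 6 * b * (ε * (kk * ℓ)) + 2 * b * ℓ := by
    nlinarith [q5, hE0, mul_nonneg (by linarith : (0:ℝ) ≤ 1 - δ) hE0]
  have q6 : 12 * b * (ε * (kk * ℓ)) ≤ 48 * b * ε * ℓ'' := by
    have h1 : 48 * b * ε * (kk / 4 * ℓ) ≤ 48 * b * ε * ℓ'' :=
      mul_le_mul_of_nonneg_left hl''lo (by positivity)
    nlinarith [h1]
  have q7 : 6 * b * ℓ ≤ 6 * b * (ε * (kk * ℓ)) := by nlinarith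
  have q8 : g ≤ 4 * b * ℓ := by nlinarith
  nlinarith [q1, q4, q6, q7, q8]

private lemma assemble (A B X Y c δ ℓ' ℓ'' : ℝ) (hδ : 0 < 1 + δ) (hc : 0 ≤ c)
    (hℓ' : 0 < ℓ') (hℓ'' : 0 < ℓ'') (hA : A ≤ X * ℓ') (hB : Y * ℓ'' ≤ (1 + δ) * B)
    (hkey : (1 + δ) * X ≤ c * Y) : A * ℓ'' ≤ c * B * ℓ' := by
  have h1 : (1 + δ) * (A * ℓ'') ≤ (1 + δ) * X * ℓ' * ℓ'' := by
    nlinarith [mul_le_mul_of_nonneg_right hA hℓ''.le]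
  have h2 : (1 + δ) * X * ℓ' * ℓ'' ≤ c * Y * ℓ' * ℓ'' := by
    nlinarith [mul_le_mul_of_nonneg_right
      (mul_le_mul_of_nonneg_right hkey hℓ'.le) hℓ''.le]
  have h3 : c * Y * ℓ' * ℓ'' ≤ c * ((1 + δ) * B) * ℓ' := by
    nlinarith [mul_le_mul_of_nonneg_right (mul_le_mul_of_nonneg_left hB hc) hℓ'.le]
  have h4 : (1 + δ) * (A * ℓ'') ≤ (1 + δ) * (c * B * ℓ') := by nlinarith [h1, h2, h3]
  exact le_of_mul_le_mul_left h4 hδ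

private lemma trivial_const (α b ε C₀ : ℝ) (hα : 0 < α) (hab : α < b)
    (hε : α / (1000 * b) < ε) (hC : C₀ = 100000 * b ^ 2 / α ^ 2) :
    4 * b ≤ (1 + C₀ * ε) * α := by
  have hb : 0 < b := hα.trans hab
  have hC₀0 : 0 < C₀ := by rw [hC]; positivity
  have h3 : C₀ * (α / (1000 * b)) * α = 100 * b := by
    rw [hC]; field_simp; ring
  have h4 : C₀ * (α / (1000 * b)) * α ≤ C₀ * ε * α := by
    have := mul_le_mul_of_nonneg_left hε.le hC₀0.le
    nlinarith [this]
  nlinarith [h3, h4]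

set_option maxHeartbeats 1000000 in
theorem grad_nearly_constant_across_scales
    (α b : ℝ) (hα : 0 < α) (hab : α < b) :
    ∃ C₀ : ℝ, 0 < C₀ ∧
    ∀ (j : ℕ) (δ η : ℝ) (k : ℕ), 0 < δ → 0 < η → 1 ≤ k →
    ∃ N : ℕ, ∀ n : ℕ, N ≤ n →
    ∀ D : ℝ × ℝ → ℝ × ℝ → ℝ, GoodPT α b (10 * n) (Real.sqrt n) D →
    ∀ ℓ : ℝ, (n : ℝ) / 2 ^ j ≤ ℓ → (k : ℝ) * ℓ ≤ n →
    ∀ z ∈ Box n, StableDirs D δ η ℓ (k : ℝ) z →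
    ∀ θ : ℝ × ℝ, norm2 θ = 1 →
    ∀ ℓ' ℓ'' : ℝ, (k : ℝ) / 4 * ℓ ≤ ℓ' → ℓ' ≤ (k : ℝ) * ℓ →
      (k : ℝ) / 4 * ℓ ≤ ℓ'' → ℓ'' ≤ (k : ℝ) * ℓ →
      grad D z θ ℓ' ≤ (1 + C₀ * (η + δ + 1 / (k : ℝ))) * grad D z θ ℓ'' := by
  have hb : 0 < b := hα.trans hab
  refine ⟨100000 * b ^ 2 / α ^ 2, by positivity, ?_⟩
  set C₀ : ℝ := 100000 * b ^ 2 / α ^ 2 with hC₀def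
  have hC₀pos : 0 < C₀ := by positivity
  intro j δ η k hδ hη hk
  refine ⟨2 ^ (2 * j + 4) * (Nat.ceil b + 2), ?_⟩
  intro n hn D hD ℓ hℓlo hℓhi z hz hstab θ hθ ℓ' ℓ'' hl'lo hl'hi hl''lo hl''hi
  obtain ⟨hD0, hDtri, hDub, hDlb⟩ := hD
  have hk1 : (1 : ℝ) ≤ (k : ℝ) := by exact_mod_cast hk
  have hk0 : (0 : ℝ) < (k : ℝ) := by linarith only [hk1]
  -- size facts
  have hN : (2 : ℝ) ^ (2 * j + 4) * (b + 2) ≤ (n : ℝ) := by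
    have h1 : ((2 ^ (2 * j + 4) * (Nat.ceil b + 2) : ℕ) : ℝ) ≤ (n : ℝ) := by exact_mod_cast hn
    push_cast at h1
    nlinarith only [h1, Nat.le_ceil b, pow_pos (by norm_num : (0:ℝ) < 2) (2 * j + 4)]
  have h2j : (16 : ℝ) ≤ 2 ^ (j + 4) := by
    calc (16 : ℝ) = 2 ^ 4 := by norm_num
    _ ≤ 2 ^ (j + 4) := pow_le_pow_right₀ one_le_two (by omega)
  have h2jpos : (0 : ℝ) < 2 ^ j := by positivity
  have hℓb : 16 * (b + 2) ≤ ℓ := by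
    have e1 : (2 : ℝ) ^ (2 * j + 4) = 2 ^ j * 2 ^ (j + 4) := by
      rw [← pow_add]; ring_nf
    calc 16 * (b + 2) ≤ 2 ^ (j + 4) * (b + 2) := by nlinarith only [h2j, hb]
    _ ≤ (n : ℝ) / 2 ^ j := by
        rw [le_div_iff₀ h2jpos]
        nlinarith only [hN, e1, h2jpos, hb, h2j,
          (by linarith only [hb] : (0:ℝ) < b + 2)]
    _ ≤ ℓ := hℓlo
  have hℓpos : 0 < ℓ := by linarith only [hℓb, hb]
  have hℓ2 : 2 ≤ ℓ := by linarith only [hℓb, hb]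
  have hℓ2b : 2 * b ≤ ℓ := by linarith only [hℓb, hb]
  have hn0 : (0 : ℝ) < (n : ℝ) := lt_of_lt_of_le (by positivity) hN
  have hℓn : ℓ ≤ (n : ℝ) := by
    nlinarith only [hℓhi, mul_nonneg (sub_nonneg.mpr hk1) hℓpos.le]
  -- quarter bounds
  have hquarter' : ℓ / 4 ≤ ℓ' := by
    nlinarith only [hl'lo, mul_nonneg (sub_nonneg.mpr hk1) hℓpos.le]
  have hquarter'' : ℓ / 4 ≤ ℓ'' := by
    nlinarith only [hl''lo, mul_nonneg (sub_nonneg.mpr hk1) hℓpos.le]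
  have hℓ'pos : 0 < ℓ' := by linarith only [hquarter', hℓpos]
  have hℓ''pos : 0 < ℓ'' := by linarith only [hquarter'', hℓpos]
  have hℓ'2 : 2 ≤ ℓ' := by linarith only [hquarter', hℓb, hb]
  have hℓ''2 : 2 ≤ ℓ'' := by linarith only [hquarter'', hℓb, hb]
  have hℓ'n : ℓ' ≤ (n : ℝ) := le_trans hl'hi hℓhi
  have hℓ''n : ℓ'' ≤ (n : ℝ) := le_trans hl''hi hℓhi
  -- sqrt n ≤ ℓ / 4
  have hsqrt : Real.sqrt n ≤ ℓ / 4 := by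
    have hs : (2 : ℝ) ^ (j + 2) ≤ Real.sqrt n := by
      rw [show ((2:ℝ)^(j+2)) = Real.sqrt (((2:ℝ)^(j+2))^2) from (Real.sqrt_sq (by positivity)).symm]
      apply Real.sqrt_le_sqrt
      calc ((2:ℝ)^(j+2))^2 = 2 ^ (2 * j + 4) := by rw [← pow_mul]; ring_nf
      _ ≤ (n : ℝ) := by
          nlinarith only [hN, pow_pos (by norm_num : (0:ℝ) < 2) (2 * j + 4), hb]
    have hsq : Real.sqrt n * Real.sqrt n = (n : ℝ) := Real.mul_self_sqrt hn0.le
    have h1 : Real.sqrt n * 2 ^ (j + 2) ≤ (n : ℝ) := by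
      nlinarith only [hs, hsq, Real.sqrt_nonneg (n : ℝ)]
    have e2 : (2 : ℝ) ^ (j + 2) = 2 ^ j * 4 := by rw [pow_add]; norm_num
    have h2 : Real.sqrt n ≤ (n : ℝ) / 2 ^ j / 4 := by
      rw [div_div, le_div_iff₀ (by positivity)]
      calc Real.sqrt n * (2 ^ j * 4) = Real.sqrt n * 2 ^ (j + 2) := by rw [e2]
      _ ≤ (n : ℝ) := h1
    calc Real.sqrt n ≤ (n : ℝ) / 2 ^ j / 4 := h2
    _ ≤ ℓ / 4 := by linarith only [h2jpos, hℓlo]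
  -- membership and basic D bounds
  have hunit_comp : ∀ u : ℝ × ℝ, norm2 u = 1 → |u.1| ≤ 1 ∧ |u.2| ≤ 1 := by
    intro u hu
    exact ⟨hu ▸ abs_fst_le_norm2 u, hu ▸ abs_snd_le_norm2 u⟩
  have hmem : ∀ (c : ℝ) (u : ℝ × ℝ), 0 ≤ c → c ≤ (n : ℝ) → norm2 u = 1 →
      z + c • u ∈ Box (10 * n) := by
    intro c u hc hcn hu
    obtain ⟨hu1, hu2⟩ := hunit_comp u hu
    obtain ⟨hz1, hz2⟩ := hz
    constructor
    · calc |(z + c • u).1| = |z.1 + c * u.1| := rfl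
      _ ≤ |z.1| + |c * u.1| := abs_add_le _ _
      _ = |z.1| + c * |u.1| := by rw [abs_mul, abs_of_nonneg hc]
      _ ≤ (n : ℝ) + c * 1 := by
          have h := mul_le_mul_of_nonneg_left hu1 hc
          linarith only [h, hz1]
      _ ≤ 10 * (n : ℝ) := by linarith only [hcn, hn0]
    · calc |(z + c • u).2| = |z.2 + c * u.2| := rfl
      _ ≤ |z.2| + |c * u.2| := abs_add_le _ _
      _ = |z.2| + c * |u.2| := by rw [abs_mul, abs_of_nonneg hc]
      _ ≤ (n : ℝ) + c * 1 := by
          have h := mul_le_mul_of_nonneg_left hu2 hc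
          linarith only [h, hz2]
      _ ≤ 10 * (n : ℝ) := by linarith only [hcn, hn0]
  have hzmem : z ∈ Box (10 * n) := by
    obtain ⟨hz1, hz2⟩ := hz
    exact ⟨by linarith only [hz1, hn0], by linarith only [hz2, hn0]⟩
  have hn2 : ∀ (c : ℝ) (u : ℝ × ℝ), norm2 (z - (z + c • u)) = |c| * norm2 u := by
    intro c u
    rw [show z - (z + c • u) = (-c) • u by module, norm2_smul, abs_neg]
  have hDlow : ∀ (c : ℝ) (u : ℝ × ℝ), Real.sqrt n ≤ c → c ≤ (n : ℝ) → norm2 u = 1 →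
      α * c ≤ D z (z + c • u) := by
    intro c u hc1 hc2 hu
    have hc0 : 0 ≤ c := le_trans (Real.sqrt_nonneg _) hc1
    have he : norm2 (z - (z + c • u)) = c := by
      rw [hn2, hu, abs_of_nonneg hc0, mul_one]
    have := hDlb z (z + c • u) hzmem (hmem c u hc0 hc2 hu) (by rw [he]; exact hc1)
    rwa [he] at this
  have hDhigh : ∀ (c : ℝ) (u : ℝ × ℝ), 0 ≤ c → norm2 u = 1 →
      D z (z + c • u) ≤ 3 * b * c + 2 * b := by
    intro c u hc hu
    have he : norm2 (z - (z + c • u)) = c := by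
      rw [hn2, hu, abs_of_nonneg hc, mul_one]
    have := hDub z (z + c • u)
    rwa [he] at this
  set ε : ℝ := η + δ + 1 / (k : ℝ) with hεdef
  have hkinv : 0 < 1 / (k : ℝ) := by positivity
  have hε0 : 0 < ε := by positivity
  have hε1C : 0 < 1 + C₀ * ε := by positivity
  -- the trivial a-priori bounds
  have hgradub : grad D z θ ℓ' ≤ 4 * b := by
    rw [grad, div_le_iff₀ hℓ'pos]
    calc D z (z + ℓ' • θ) ≤ 3 * b * ℓ' + 2 * b := hDhigh ℓ' θ hℓ'pos.le hθ
    _ ≤ 4 * b * ℓ' := by nlinarith only [hb, hℓ'2]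
  have hgradlb : α ≤ grad D z θ ℓ'' := by
    rw [grad, le_div_iff₀ hℓ''pos]
    exact hDlow ℓ'' θ (by linarith only [hsqrt, hquarter'']) hℓ''n hθ
  rcases le_or_gt ε (α / (1000 * b)) with hmain | htriv
  · -- main case
    have hεb : 1000 * b * ε ≤ α := by
      have h := hmain
      rw [le_div_iff₀ (by positivity : (0:ℝ) < 1000 * b)] at h
      linarith only [h]
    have hδε : δ ≤ ε := by
      have h : 0 < η + 1 / (k : ℝ) := by positivity
      simp only [hεdef]; linarith only [h]
    have hηε : η ≤ ε := by
      have h : 0 < δ + 1 / (k : ℝ) := by positivity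
      simp only [hεdef]; linarith only [h]
    have hinvε : 1 / (k : ℝ) ≤ ε := by
      have h : 0 < η + δ := by positivity
      simp only [hεdef]; linarith only [h]
    have hεsmall : ε < 1 / 1000 := by
      have h1 : α / (1000 * b) < 1 / 1000 := by
        rw [div_lt_div_iff₀ (by positivity) (by norm_num)]
        linarith only [hab]
      exact lt_of_le_of_lt hmain h1
    have hδ1 : δ ≤ 1 := by linarith only [hεsmall, hη, hkinv]
    have hη1 : η < 1 := by linarith only [hεsmall, hδ, hkinv]
    have hk1000 : (1000 : ℝ) < (k : ℝ) := by
      have h1 : 1 / (k : ℝ) < 1 / 1000 := lt_of_le_of_lt hinvε hεsmall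
      rw [div_lt_div_iff₀ hk0 (by norm_num)] at h1
      linarith only [h1]
    have hekl : ℓ + η * ((k:ℝ) * ℓ) ≤ ε * ((k:ℝ) * ℓ) := by
      have he : ε * ((k:ℝ) * ℓ) = η * ((k:ℝ) * ℓ) + δ * ((k:ℝ) * ℓ) + ℓ := by
        simp only [hεdef]; field_simp
      have hpos : 0 ≤ δ * ((k:ℝ) * ℓ) := by positivity
      linarith only [he, hpos]
    -- choose a close direction from the net
    obtain ⟨a, ha0, ha2, hθa⟩ := exists_angle θ hθ
    have hπ : (3 : ℝ) < Real.pi := Real.pi_gt_three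
    obtain ⟨i, hi_le, hnear⟩ : ∃ i : ℕ, (i : ℝ) * η ≤ 2 * Real.pi - η ∧
        norm2 (θ - dir ((i : ℝ) * η)) ≤ η := by
      rcases le_or_gt a (2 * Real.pi - η) with hcase | hcase
      · refine ⟨Nat.floor (a / η), ?_, ?_⟩
        · have h1 : (Nat.floor (a / η) : ℝ) ≤ a / η := Nat.floor_le (by positivity)
          have h2 := mul_le_mul_of_nonneg_right h1 hη.le
          rw [div_mul_cancel₀ a (ne_of_gt hη)] at h2
          linarith only [h2, hcase]
        · have h1 : (Nat.floor (a / η) : ℝ) ≤ a / η := Nat.floor_le (by positivity)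
          have h2 := mul_le_mul_of_nonneg_right h1 hη.le
          rw [div_mul_cancel₀ a (ne_of_gt hη)] at h2
          have h3 : a / η < (Nat.floor (a / η) : ℝ) + 1 := Nat.lt_floor_add_one _
          have h4 := mul_lt_mul_of_pos_right h3 hη
          rw [div_mul_cancel₀ a (ne_of_gt hη)] at h4
          rw [hθa]
          calc norm2 (dir a - dir ((Nat.floor (a / η) : ℝ) * η)) ≤
              |a - (Nat.floor (a / η) : ℝ) * η| := dir_sub_le _ _
          _ ≤ η := by
              rw [abs_of_nonneg (by linarith only [h2])]
              linarith only [h4]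
      · refine ⟨0, ?_, ?_⟩
        · push_cast
          linarith only [hη1, hπ]
        · have hd : dir a = dir (a - 2 * Real.pi) := by
            apply Prod.ext <;>
              simp [dir, Real.cos_sub_two_pi, Real.sin_sub_two_pi]
          push_cast
          rw [hθa, zero_mul, hd]
          calc norm2 (dir (a - 2 * Real.pi) - dir 0) ≤ |a - 2 * Real.pi - 0| :=
              dir_sub_le _ _
          _ ≤ η := by
              rw [abs_of_nonpos (by linarith only [ha2])]
              linarith only [hcase]
    set θi : ℝ × ℝ := dir ((i : ℝ) * η) with hθidef
    have hθiunit : norm2 θi = 1 := norm2_dir _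
    have hstabi := hstab i hi_le
    set g : ℝ := D z (z + ℓ • θi) with hgdef
    have hg0 : 0 ≤ g := hD0 _ _
    have hgub : g ≤ 4 * b * ℓ := by
      calc g ≤ 3 * b * ℓ + 2 * b := hDhigh ℓ θi hℓpos.le hθiunit
      _ ≤ 4 * b * ℓ := by nlinarith only [hb, hℓ2]
    have h1δ : (0 : ℝ) < 1 + δ := by linarith only [hδ]
    have hglb : α * ℓ ≤ (1 + δ) * g := by
      have hs := (hstabi k hk (le_refl _)).2
      have hlow := hDlow ((k:ℝ) * ℓ) θi
        (by nlinarith only [hsqrt, hℓpos, mul_nonneg (sub_nonneg.mpr hk1) hℓpos.le])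
        hℓhi hθiunit
      have hc : α * ((k:ℝ) * ℓ) ≤ (1 + δ) * (k:ℝ) * g := le_trans hlow hs
      nlinarith only [hc, hk0]
    set G : ℝ := g / ℓ with hGdef
    have hgG : g = G * ℓ := by rw [hGdef, div_mul_cancel₀ _ (ne_of_gt hℓpos)]
    have hG0 : 0 ≤ G := by positivity
    have hGub : G ≤ 4 * b := by
      rw [hGdef, div_le_iff₀ hℓpos]
      linarith only [hgub]
    have hGlb : α ≤ (1 + δ) * G := by
      have he : (1 + δ) * G * ℓ = (1 + δ) * g := by rw [hgG]; ring
      nlinarith only [hglb, he, hℓpos]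
    -- gap estimates
    have hnormθsub : norm2 (θi - θ) ≤ η := by
      rw [show θi - θ = (-1 : ℝ) • (θ - θi) by module, norm2_smul]
      norm_num
      exact hnear
    have hnormgap : ∀ (c c' : ℝ), 0 ≤ c' → |c - c'| ≤ ℓ → c' ≤ (k : ℝ) * ℓ →
        norm2 ((z + c • θi) - (z + c' • θ)) ≤ ℓ + η * ((k:ℝ) * ℓ) := by
      intro c c' hc' habs hck
      calc norm2 ((z + c • θi) - (z + c' • θ)) ≤
          norm2 ((z + c • θi) - (z + c' • θi)) + norm2 ((z + c' • θi) - (z + c' • θ)) :=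
            norm2_sub_le _ _ _
      _ = |c - c'| * norm2 θi + |c'| * norm2 (θi - θ) := by
          rw [show (z + c • θi) - (z + c' • θi) = (c - c') • θi by module,
            show (z + c' • θi) - (z + c' • θ) = c' • (θi - θ) by module,
            norm2_smul, norm2_smul]
      _ ≤ ℓ * 1 + c' * η := by
          have h1 : |c - c'| * norm2 θi ≤ ℓ * 1 := by
            rw [hθiunit]; linarith only [habs]
          have h2 : |c'| * norm2 (θi - θ) ≤ c' * η := by
            rw [abs_of_nonneg hc']
            exact mul_le_mul_of_nonneg_left hnormθsub hc'
          linarith only [h1, h2]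
      _ ≤ ℓ + η * ((k:ℝ) * ℓ) := by
          have h := mul_le_mul_of_nonneg_right hck hη.le
          linarith only [h]
    set E : ℝ := 3 * b * (ℓ + η * ((k:ℝ) * ℓ)) + 2 * b with hEdef
    -- k₁ : ceiling of ℓ'/ℓ
    set k₁ : ℕ := Nat.ceil (ℓ' / ℓ) with hk₁def
    have hk₁pos : 1 ≤ k₁ := Nat.one_le_iff_ne_zero.mpr (by
      simp only [hk₁def, ne_eq, Nat.ceil_eq_zero, not_le]
      positivity)
    have hk₁le : (k₁ : ℝ) ≤ (k : ℝ) := by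
      have h : k₁ ≤ k := Nat.ceil_le.mpr (by rw [div_le_iff₀ hℓpos]; exact hl'hi)
      exact_mod_cast h
    have hk₁ge : ℓ' ≤ (k₁ : ℝ) * ℓ := by
      have h := Nat.le_ceil (ℓ' / ℓ)
      rw [div_le_iff₀ hℓpos] at h
      linarith only [h]
    have hk₁ub : (k₁ : ℝ) * ℓ ≤ ℓ' + ℓ := by
      have h1 : (k₁ : ℝ) < ℓ' / ℓ + 1 := by
        have := Nat.ceil_lt_add_one (show 0 ≤ ℓ' / ℓ by positivity)
        exact_mod_cast this
      have h2 : (ℓ' / ℓ + 1) * ℓ = ℓ' + ℓ := by field_simp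
      nlinarith only [h1, h2, hℓpos]
    -- k₂ : floor of ℓ''/ℓ
    set k₂ : ℕ := Nat.floor (ℓ'' / ℓ) with hk₂def
    have hℓℓ'' : ℓ ≤ ℓ'' := by
      nlinarith only [hl''lo,
        mul_nonneg (by linarith only [hk1000] : (0:ℝ) ≤ (k:ℝ) - 4) hℓpos.le]
    have hk₂pos : 1 ≤ k₂ := by
      apply Nat.le_floor
      rw [Nat.cast_one, le_div_iff₀ hℓpos]
      linarith only [hℓℓ'']
    have hk₂le : (k₂ : ℝ) ≤ (k : ℝ) := by
      have h1 : (k₂ : ℝ) ≤ ℓ'' / ℓ := Nat.floor_le (by positivity)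
      rw [le_div_iff₀ hℓpos] at h1
      nlinarith only [h1, hl''hi, hℓpos]
    have hk₂ub : (k₂ : ℝ) * ℓ ≤ ℓ'' := by
      have h1 : (k₂ : ℝ) ≤ ℓ'' / ℓ := Nat.floor_le (by positivity)
      rw [le_div_iff₀ hℓpos] at h1
      linarith only [h1]
    have hk₂lb : ℓ'' ≤ (k₂ : ℝ) * ℓ + ℓ := by
      have h1 : ℓ'' / ℓ < (k₂ : ℝ) + 1 := Nat.lt_floor_add_one _
      have h2 := mul_lt_mul_of_pos_right h1 hℓpos
      rw [div_mul_cancel₀ ℓ'' (ne_of_gt hℓpos)] at h2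
      linarith only [h2]
    -- upper bound on A
    set A : ℝ := D z (z + ℓ' • θ) with hAdef
    have hs1 : D z (z + ((k₁ : ℝ) * ℓ) • θi) ≤ (1 + δ) * (k₁ : ℝ) * g :=
      (hstabi k₁ hk₁pos hk₁le).2
    have hgap1 : D (z + ((k₁ : ℝ) * ℓ) • θi) (z + ℓ' • θ) ≤ E := by
      calc D (z + ((k₁ : ℝ) * ℓ) • θi) (z + ℓ' • θ) ≤
          3 * b * norm2 ((z + ((k₁ : ℝ) * ℓ) • θi) - (z + ℓ' • θ)) + 2 * b := hDub _ _
      _ ≤ 3 * b * (ℓ + η * ((k:ℝ) * ℓ)) + 2 * b := by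
          have h := hnormgap ((k₁ : ℝ) * ℓ) ℓ' hℓ'pos.le
            (by rw [abs_of_nonneg (by linarith only [hk₁ge])]
                linarith only [hk₁ub]) hl'hi
          nlinarith only [h, hb]
    have hAub : A ≤ (1 + δ) * (k₁ : ℝ) * g + E := by
      calc A ≤ D z (z + ((k₁ : ℝ) * ℓ) • θi) + D (z + ((k₁ : ℝ) * ℓ) • θi) (z + ℓ' • θ) :=
          hDtri _ _ _
      _ ≤ (1 + δ) * (k₁ : ℝ) * g + E := by linarith only [hs1, hgap1]
    have hA2 : A ≤ ((1 + δ) * G + 48 * b * ε) * ℓ' :=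
      stepA b δ η ε (k:ℝ) ℓ ℓ' G g (k₁:ℝ) A E hb hδ.le hδ1 hη.le hℓ2 hℓpos hℓ2b
        hgG hG0 hGub hEdef hekl hε0 hk1 hl'lo (by positivity) hk₁ub hAub
    -- lower bound on B
    set B : ℝ := D z (z + ℓ'' • θ) with hBdef
    have hs2 : (k₂ : ℝ) * g / (1 + δ) ≤ D z (z + ((k₂ : ℝ) * ℓ) • θi) :=
      (hstabi k₂ hk₂pos hk₂le).1
    have hgap2 : D (z + ℓ'' • θ) (z + ((k₂ : ℝ) * ℓ) • θi) ≤ E := by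
      calc D (z + ℓ'' • θ) (z + ((k₂ : ℝ) * ℓ) • θi) ≤
          3 * b * norm2 ((z + ℓ'' • θ) - (z + ((k₂ : ℝ) * ℓ) • θi)) + 2 * b := hDub _ _
      _ ≤ 3 * b * (ℓ + η * ((k:ℝ) * ℓ)) + 2 * b := by
          have h0 : norm2 ((z + ℓ'' • θ) - (z + ((k₂ : ℝ) * ℓ) • θi)) =
              norm2 ((z + ((k₂ : ℝ) * ℓ) • θi) - (z + ℓ'' • θ)) := norm2_comm _ _
          have h := hnormgap ((k₂ : ℝ) * ℓ) ℓ'' hℓ''pos.le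
            (by rw [abs_of_nonpos (by linarith only [hk₂ub])]
                linarith only [hk₂lb]) hl''hi
          rw [h0]
          nlinarith only [h, hb]
    have hBlb : (k₂ : ℝ) * g ≤ (1 + δ) * (B + E) := by
      have h1 : D z (z + ((k₂ : ℝ) * ℓ) • θi) ≤ B + E := by
        calc D z (z + ((k₂ : ℝ) * ℓ) • θi) ≤
            B + D (z + ℓ'' • θ) (z + ((k₂ : ℝ) * ℓ) • θi) := hDtri _ _ _
        _ ≤ B + E := by linarith only [hgap2]
      have h2 : (k₂ : ℝ) * g / (1 + δ) ≤ B + E := le_trans hs2 h1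
      rw [div_le_iff₀ h1δ] at h2
      linarith only [h2]
    have hB2 : (G - 48 * b * ε) * ℓ'' ≤ (1 + δ) * B :=
      stepB b δ η ε (k:ℝ) ℓ ℓ'' G g (k₂:ℝ) B E hb hδ.le hδ1 hη.le hℓ2 hℓpos hℓ2b
        hgG hG0 hGub hEdef hekl hε0 hk1 hl''lo (by positivity) hk₂lb hBlb
    have hkey : (1 + δ) * ((1 + δ) * G + 48 * b * ε) ≤ (1 + C₀ * ε) * (G - 48 * b * ε) :=
      keyineq α b δ ε G C₀ hα hab hδ.le hδ1 hδε hε0 hεb hGlb hGub hG0 hC₀def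
    -- assemble
    simp only [grad]
    rw [div_le_iff₀ hℓ'pos, ← mul_div_assoc, div_mul_eq_mul_div, le_div_iff₀ hℓ''pos]
    exact assemble A B ((1 + δ) * G + 48 * b * ε) (G - 48 * b * ε) (1 + C₀ * ε) δ ℓ' ℓ''
      h1δ hε1C.le hℓ'pos hℓ''pos hA2 hB2 hkey
  · -- trivial case
    have hC40 : 4 * b ≤ (1 + C₀ * ε) * α :=
      trivial_const α b ε C₀ hα hab htriv hC₀def
    calc grad D z θ ℓ' ≤ 4 * b := hgradub
    _ ≤ (1 + C₀ * ε) * α := hC40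
    _ ≤ (1 + C₀ * ε) * grad D z θ ℓ'' :=
      mul_le_mul_of_nonneg_left hgradlb hε1C.le
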